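/- For all v, w ∈ V, all (j,i), (t,s) ∈ {1,…,n}² and all ℓ ≥ 1, the words w^{(ℓ)}_{t,s} and v^{(ℓ)}_{j,i} of ⟨S⟩ are equal if and only if one of the following holds: (a) w = v and (t,s) = (j,i); (b) ℓ = 1, w = vᵀ and (t,s) = (σ(i),σ(j)); (c) ℓ = 2, w = vᵀ and (t,s) = (n,n) = (j,i). -/

import Mathlib

/-!
Common setting (from the paper "The Anick resolution of the co-unit of the free unitary
quantum group", arXiv:2403.06663):

`k` is a field and `n ≥ 2`.  `S` is the set of `2n²` generators `u∘_{j,i}, u•_{j,i}`,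
`(j,i) ∈ {1,…,n}²`, with the involution `*` exchanging `u∘_{j,i}` and `u•_{j,i}`.
Indices are realized `0`-based as elements of `Fin n` (so the index `1` is `fin1 = 0`,
the index `n` is `finN = n-1`, and `σ(i) = n-i+1` is `Fin.rev`).
-/

namespace UnPlusAnick

/-- A generator: a color (`false` = white `∘`, `true` = black `•`) and a pair of indices. -/
abbrev Gen (n : ℕ) := Bool × Fin n × Fin n

/-- The involution `*` on the generators: it flips the color and keeps the indices. -/
def genStar {n : ℕ} (g : Gen n) : Gen n := (!g.1, g.2)

/-- An `n × n` matrix with entries in the set of generators. -/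
abbrev Mat (n : ℕ) := Fin n → Fin n → Gen n

/-- The fundamental matrix `u`, `u_{j,i} = u∘_{j,i}`. -/
def uMat (n : ℕ) : Mat n := fun j i => (false, j, i)

/-- The transpose `vᵀ`. -/
def mT {n : ℕ} (v : Mat n) : Mat n := fun j i => v i j

/-- The matrix `v^σ`, `(v^σ)_{j,i} = (v_{σ(j),σ(i)})^*`. -/
def mS {n : ℕ} (v : Mat n) : Mat n := fun j i => genStar (v j.rev i.rev)

/-- The matrix `v^δ`, `(v^δ)_{j,i} = (v_{σ(i),σ(j)})^*`; thus `v^δ = (v^σ)ᵀ`. -/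
def mD {n : ℕ} (v : Mat n) : Mat n := fun j i => genStar (v i.rev j.rev)

/-- The set `V = {u, uᵀ, u^σ, u^δ}`. -/
def V (n : ℕ) : Set (Mat n) := {uMat n, mT (uMat n), mS (uMat n), mD (uMat n)}

/-- The index `1` of `{1, …, n}`, as the `0`-based element `0` of `Fin n`. -/
def fin1 (n : ℕ) (hn : 2 ≤ n) : Fin n := ⟨0, by omega⟩

/-- The index `n` of `{1, …, n}`, as the `0`-based element `n - 1` of `Fin n`. -/
def finN (n : ℕ) (hn : 2 ≤ n) : Fin n := ⟨n - 1, by omega⟩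

theorem genStar_genStar {n : ℕ} (g : Gen n) : genStar (genStar g) = g := by simp [genStar]

theorem mS_mS {n : ℕ} (v : Mat n) : mS (mS v) = v := by
  funext j i; simp [mS, genStar_genStar]

theorem mD_mD {n : ℕ} (v : Mat n) : mD (mD v) = v := by
  funext j i; simp [mD, genStar_genStar]

theorem mS_mD {n : ℕ} (v : Mat n) : mS (mD v) = mT v := by
  funext j i; simp [mS, mD, mT, genStar_genStar]

theorem mD_mS {n : ℕ} (v : Mat n) : mD (mS v) = mT v := by
  funext j i; simp [mS, mD, mT, genStar_genStar]

/-- `V` is closed under transposition. -/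
theorem V_mT {n : ℕ} {v : Mat n} (hv : v ∈ V n) : mT v ∈ V n := by
  simp only [V, Set.mem_insert_iff, Set.mem_singleton_iff] at hv ⊢
  rcases hv with rfl | rfl | rfl | rfl
  · exact Or.inr (Or.inl rfl)
  · exact Or.inl rfl
  · exact Or.inr (Or.inr (Or.inr rfl))
  · exact Or.inr (Or.inr (Or.inl rfl))

/-- `V` is closed under `v ↦ v^σ`. -/
theorem V_mS {n : ℕ} {v : Mat n} (hv : v ∈ V n) : mS v ∈ V n := by
  simp only [V, Set.mem_insert_iff, Set.mem_singleton_iff] at hv ⊢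
  rcases hv with rfl | rfl | rfl | rfl
  · exact Or.inr (Or.inr (Or.inl rfl))
  · exact Or.inr (Or.inr (Or.inr rfl))
  · exact Or.inl (mS_mS _)
  · exact Or.inr (Or.inl (mS_mD _))

/-- `V` is closed under `v ↦ v^δ`. -/
theorem V_mD {n : ℕ} {v : Mat n} (hv : v ∈ V n) : mD v ∈ V n := by
  simp only [V, Set.mem_insert_iff, Set.mem_singleton_iff] at hv ⊢
  rcases hv with rfl | rfl | rfl | rfl
  · exact Or.inr (Or.inr (Or.inr rfl))
  · exact Or.inr (Or.inr (Or.inl rfl))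
  · exact Or.inr (Or.inl (mD_mS _))
  · exact Or.inl (mD_mD _)

/-! ### Words and the free algebra -/

/-- Words in the generators: the free monoid over the set of generators. -/
abbrev Word (n : ℕ) := FreeMonoid (Gen n)

/-- The free unital associative `k`-algebra on the generators, realized as the monoid algebra
of the free monoid of words; its canonical `k`-basis is the set of words. -/
abbrev FreeAlg (k : Type*) [Field k] (n : ℕ) := MonoidAlgebra k (Word n)

/-- A word, viewed as a monomial in the free algebra. -/
noncomputable def wd (k : Type*) [Field k] {n : ℕ} (w : Word n) : FreeAlg k n :=
  MonoidAlgebra.of k (Word n) w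

/-- The relation `b^v_{j,i} = ∑_{s=1}^{n} v_{j,σ(s)} (v^δ)_{s,σ(i)} − δ_{j,i} · 1`. -/
noncomputable def brel (k : Type*) [Field k] {n : ℕ} (v : Mat n) (j i : Fin n) : FreeAlg k n :=
  (∑ s : Fin n, wd k (FreeMonoid.of (v j s.rev) * FreeMonoid.of (mD v s i.rev)))
    - if j = i then 1 else 0

/-- The set of relations `R = {b^v_{j,i} : v ∈ V, (j,i) ∈ {1,…,n}²}`. -/
def rels (k : Type*) [Field k] (n : ℕ) : Set (FreeAlg k n) :=
  {x | ∃ v ∈ V n, ∃ j i : Fin n, x = brel k v j i}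

/-- `b̃^v = v_{n,n}(v^δ)_{1,1} − ∑_{s=2}^{n} ∑_{t=1}^{n−1} v_{t,σ(s)}(v^δ)_{s,σ(t)} + (n−2)·1`. -/
noncomputable def btil (k : Type*) [Field k] (n : ℕ) (hn : 2 ≤ n) (v : Mat n) : FreeAlg k n :=
  wd k (FreeMonoid.of (v (finN n hn) (finN n hn)) * FreeMonoid.of (mD v (fin1 n hn) (fin1 n hn)))
    - (∑ s ∈ Finset.univ.filter (fun s : Fin n => s ≠ fin1 n hn),
        ∑ t ∈ Finset.univ.filter (fun t : Fin n => t ≠ finN n hn),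
          wd k (FreeMonoid.of (v t s.rev) * FreeMonoid.of (mD v s t.rev)))
    + ((n - 2 : ℕ) : FreeAlg k n)

/-! ### The monomial order and tips -/

/-- The strict order on the generators: every black generator is smaller than every white one;
`u•_{t,s} < u•_{j,i}` iff `(j,i) <` `(t,s)` lexicographically, and `u∘_{t,s} < u∘_{j,i}` iff
`(t,s) < (j,i)` lexicographically. -/
def genLT {n : ℕ} (g h : Gen n) : Prop :=
  (g.1 = true ∧ h.1 = false) ∨
    (g.1 = true ∧ h.1 = true ∧ toLex h.2 < toLex g.2) ∨
    (g.1 = false ∧ h.1 = false ∧ toLex g.2 < toLex h.2)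

/-- The degreewise lexicographic extension of the order on generators to words:
`w ≤ w'` iff `w = w'`, or `w` is shorter than `w'`, or they have the same length and `w`
precedes `w'` lexicographically letter by letter. -/
def wordLE {n : ℕ} (w w' : Word n) : Prop :=
  w = w' ∨ (FreeMonoid.toList w).length < (FreeMonoid.toList w').length ∨
    ((FreeMonoid.toList w).length = (FreeMonoid.toList w').length ∧
      List.Lex genLT (FreeMonoid.toList w) (FreeMonoid.toList w'))

/-- `IsTip f t`: the word `t` is the `≤`-largest word occurring with nonzero coefficient in
`f`, i.e. `Tip(f) = t`. -/
def IsTip (k : Type*) [Field k] {n : ℕ} (f : FreeAlg k n) (t : Word n) : Prop :=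
  f.coeff t ≠ 0 ∧ ∀ w : Word n, f.coeff w ≠ 0 → wordLE w t

/-- `w` divides `w'` (as words in the free monoid). -/
def WDvd {n : ℕ} (w w' : Word n) : Prop := ∃ w₁ w₂ : Word n, w' = w₁ * w * w₂

/-! ### The ideal of relations -/

/-- The two-sided ideal `I` of the free algebra generated by the set of relations `R`. -/
noncomputable def idl (k : Type*) [Field k] (n : ℕ) : TwoSidedIdeal (FreeAlg k n) :=
  TwoSidedIdeal.span (rels k n)

/-- The set `Tip(I)` of tips of nonzero elements of `I`. -/
def TipSet (k : Type*) [Field k] (n : ℕ) : Set (Word n) :=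
  {w | ∃ f : FreeAlg k n, f ∈ idl k n ∧ f ≠ 0 ∧ IsTip k f w}

/-! ### Reductions and ambiguities -/

/-- `φ` is a one-step reduction by `f`: there are fixed words `w₁`, `w₂` such that `φ` maps the
word `w₁ Tip(f) w₂` to `w₁ (Tip(f) − c⁻¹ f) w₂`, where `c` is the leading coefficient of `f`,
and fixes every other word. -/
def IsOneStep (k : Type*) [Field k] {n : ℕ} (f : FreeAlg k n)
    (φ : FreeAlg k n →ₗ[k] FreeAlg k n) : Prop :=
  f ≠ 0 ∧ ∃ (w₁ w₂ t : Word n), IsTip k f t ∧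
    φ (wd k (w₁ * t * w₂)) = wd k w₁ * (wd k t - (f.coeff t)⁻¹ • f) * wd k w₂ ∧
    ∀ w : Word n, w ≠ w₁ * t * w₂ → φ (wd k w) = wd k w

/-- A reduction by a set `G`: a finite composition of one-step reductions by nonzero elements
of `G`. -/
inductive IsReduction (k : Type*) [Field k] {n : ℕ} (G : Set (FreeAlg k n)) :
    (FreeAlg k n →ₗ[k] FreeAlg k n) → Prop
  | id : IsReduction k G LinearMap.id
  | comp {φ ψ : FreeAlg k n →ₗ[k] FreeAlg k n} {g : FreeAlg k n} (hg : g ∈ G)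
      (hφ : IsOneStep k g φ) (hψ : IsReduction k G ψ) : IsReduction k G (φ ∘ₗ ψ)

/-- `(g, g', w₁, w₂)` is an inclusion ambiguity of `G`. -/
def IsInclusionAmbiguity (k : Type*) [Field k] {n : ℕ} (G : Set (FreeAlg k n))
    (g g' : FreeAlg k n) (w₁ w₂ : Word n) : Prop :=
  g ∈ G ∧ g' ∈ G ∧ g ≠ 0 ∧ g' ≠ 0 ∧ g ≠ g' ∧
    ∃ t t' : Word n, IsTip k g t ∧ IsTip k g' t' ∧ w₁ * t * w₂ = t'

/-- The inclusion ambiguity `(g, g', w₁, w₂)` of `G` resolves. -/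
def InclusionAmbiguityResolves (k : Type*) [Field k] {n : ℕ} (G : Set (FreeAlg k n))
    (g g' : FreeAlg k n) (w₁ w₂ : Word n) : Prop :=
  ∀ t t' : Word n, IsTip k g t → IsTip k g' t' →
    ∃ φ₁ φ₂ : FreeAlg k n →ₗ[k] FreeAlg k n, IsReduction k G φ₁ ∧ IsReduction k G φ₂ ∧
      φ₁ (wd k t' - (g'.coeff t')⁻¹ • g') = φ₂ (wd k w₁ * (wd k t - (g.coeff t)⁻¹ • g) * wd k w₂)

/-- `(g₁, g₂, w₁, w₂)` is an overlap ambiguity of `G`. -/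
def IsOverlapAmbiguity (k : Type*) [Field k] {n : ℕ} (G : Set (FreeAlg k n))
    (g₁ g₂ : FreeAlg k n) (w₁ w₂ : Word n) : Prop :=
  g₁ ∈ G ∧ g₂ ∈ G ∧ g₁ ≠ 0 ∧ g₂ ≠ 0 ∧ ¬(w₁ = 1 ∧ w₂ = 1) ∧
    ∃ t₁ t₂ : Word n, IsTip k g₁ t₁ ∧ IsTip k g₂ t₂ ∧ t₁ * w₂ = w₁ * t₂ ∧
      ¬WDvd t₂ w₂ ∧ ¬WDvd t₁ w₁

/-- The overlap ambiguity `(g₁, g₂, w₁, w₂)` of `G` resolves. -/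
def OverlapAmbiguityResolves (k : Type*) [Field k] {n : ℕ} (G : Set (FreeAlg k n))
    (g₁ g₂ : FreeAlg k n) (w₁ w₂ : Word n) : Prop :=
  ∀ t₁ t₂ : Word n, IsTip k g₁ t₁ → IsTip k g₂ t₂ →
    ∃ φ₁ φ₂ : FreeAlg k n →ₗ[k] FreeAlg k n, IsReduction k G φ₁ ∧ IsReduction k G φ₂ ∧
      φ₁ ((wd k t₁ - (g₁.coeff t₁)⁻¹ • g₁) * wd k w₂) = φ₂ (wd k w₁ * (wd k t₂ - (g₂.coeff t₂)⁻¹ • g₂))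

/-! ### Gröbner bases -/

/-- `G` is a Gröbner basis of the two-sided ideal `J` with respect to the order: `G ⊆ J` and
the tip of every nonzero element of `J` is divisible by the tip of some nonzero element
of `G`. -/
def IsGroebner (k : Type*) [Field k] {n : ℕ} (G : Set (FreeAlg k n))
    (J : TwoSidedIdeal (FreeAlg k n)) : Prop :=
  (∀ g ∈ G, g ∈ J) ∧
    ∀ f : FreeAlg k n, f ∈ J → f ≠ 0 → ∀ t : Word n, IsTip k f t →
      ∃ g ∈ G, g ≠ 0 ∧ ∃ tg : Word n, IsTip k g tg ∧ WDvd tg t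

/-- A minimal Gröbner basis: `0 ∉ G` and the tip of no element of `G` divides the tip of a
different element of `G`. -/
def IsMinimalGroebner (k : Type*) [Field k] {n : ℕ} (G : Set (FreeAlg k n))
    (J : TwoSidedIdeal (FreeAlg k n)) : Prop :=
  IsGroebner k G J ∧ (0 : FreeAlg k n) ∉ G ∧
    ∀ g ∈ G, ∀ g' ∈ G, g ≠ g' → ∀ t t' : Word n, IsTip k g t → IsTip k g' t' → ¬WDvd t t'

/-- A reduced Gröbner basis: minimal, every element has leading coefficient `1`, and the tip of
no element of `G` divides a word occurring with nonzero coefficient in a different element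
of `G`. -/
def IsReducedGroebner (k : Type*) [Field k] {n : ℕ} (G : Set (FreeAlg k n))
    (J : TwoSidedIdeal (FreeAlg k n)) : Prop :=
  IsMinimalGroebner k G J ∧ (∀ g ∈ G, ∀ t : Word n, IsTip k g t → g.coeff t = 1) ∧
    ∀ g ∈ G, ∀ g' ∈ G, g ≠ g' → ∀ t : Word n, IsTip k g t →
      ∀ w : Word n, g'.coeff w ≠ 0 → ¬WDvd t w

/-! ### Monoidal ideals -/

/-- A monoidal ideal of the free monoid of words: a set of words containing all multiples of
its elements. -/
def IsMonIdeal {n : ℕ} (M : Set (Word n)) : Prop :=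
  ∀ w ∈ M, ∀ w₁ w₂ : Word n, w₁ * w * w₂ ∈ M

/-- `N` generates `M` as a monoidal ideal: `M` is the smallest monoidal ideal containing `N`. -/
def GeneratesMonIdeal {n : ℕ} (N M : Set (Word n)) : Prop :=
  IsMonIdeal M ∧ N ⊆ M ∧ ∀ M' : Set (Word n), IsMonIdeal M' → N ⊆ M' → M ⊆ M'

/-! ### Chain words -/

/-- `v^{[ℓ]}`: equal to `v` for odd `ℓ` and to `v^δ` for even `ℓ`. -/
def pw {n : ℕ} (l : ℕ) (v : Mat n) : Mat n := if l % 2 = 1 then v else mD v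

/-- The word `v^{(ℓ)}_{j,i}` (for `ℓ ≥ 1`). -/
def chainWord (n : ℕ) (hn : 2 ≤ n) (v : Mat n) (l : ℕ) (j i : Fin n) : Word n :=
  if l = 1 then FreeMonoid.of (v j i.rev)
  else if l % 2 = 0 then
    FreeMonoid.of (v j (finN n hn)) *
      (FreeMonoid.of (mD v (fin1 n hn) (finN n hn)) *
          FreeMonoid.of (v (fin1 n hn) (finN n hn))) ^ ((l - 2) / 2) *
      FreeMonoid.of (mD v (fin1 n hn) i.rev)
  else
    FreeMonoid.of (v j (finN n hn)) *
      (FreeMonoid.of (mD v (fin1 n hn) (finN n hn)) *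
          FreeMonoid.of (v (fin1 n hn) (finN n hn))) ^ ((l - 3) / 2) *
      FreeMonoid.of (mD v (fin1 n hn) (finN n hn)) * FreeMonoid.of (v (fin1 n hn) i.rev)

/-- The set `C_ℓ = {v^{(ℓ)}_{j,i} : v ∈ V, (j,i) ∈ {1,…,n}²}` of `ℓ`-chains. -/
def Cset (n : ℕ) (hn : 2 ≤ n) (l : ℕ) : Set (Word n) :=
  {w | ∃ v ∈ V n, ∃ j i : Fin n, w = chainWord n hn v l j i}

/-! ### The quotient algebra `A = F/I`, the counit and the modules of the resolution -/

/-- The relation identifying each element of `R` with `0`; the induced ring congruence realizes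
the quotient `A = F/I` by the two-sided ideal `I` generated by `R`. -/
def relR (k : Type*) [Field k] (n : ℕ) : FreeAlg k n → FreeAlg k n → Prop :=
  fun a b => a ∈ rels k n ∧ b = 0

/-- The `k`-algebra `A = F/I`. -/
abbrev Aq (k : Type*) [Field k] (n : ℕ) := RingQuot (relR k n)

/-- The quotient map `F → A = F/I`. -/
noncomputable def pr (k : Type*) [Field k] (n : ℕ) : FreeAlg k n →ₐ[k] Aq k n :=
  RingQuot.mkAlgHom k (relR k n)

/-- The class `v_{j,i} + I ∈ A` of a generator. -/
noncomputable def gen (k : Type*) [Field k] {n : ℕ} (v : Mat n) (j i : Fin n) : Aq k n :=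
  pr k n (wd k (FreeMonoid.of (v j i)))

/-- The ring homomorphism `Aᵐᵒᵖ →+* k` induced by `ε` (using the commutativity of `k`). -/
noncomputable def epsOp (k : Type*) [Field k] (n : ℕ) (ε : Aq k n →ₐ[k] k) :
    (Aq k n)ᵐᵒᵖ →+* k where
  toFun a := ε a.unop
  map_one' := by simp
  map_mul' a b := by simp [mul_comm]
  map_zero' := by simp
  map_add' a b := by simp

/-- The right `A`-module `k_ε`: the field `k` with the right `A`-action induced by `ε`,
realized as a left module over the opposite algebra `Aᵐᵒᵖ`. -/
def KE (k : Type*) [Field k] (n : ℕ) (_ε : Aq k n →ₐ[k] k) : Type _ := k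

instance (k : Type*) [Field k] (n : ℕ) (ε : Aq k n →ₐ[k] k) : AddCommGroup (KE k n ε) :=
  inferInstanceAs (AddCommGroup k)

instance (k : Type*) [Field k] (n : ℕ) (ε : Aq k n →ₐ[k] k) : Module k (KE k n ε) :=
  inferInstanceAs (Module k k)

instance (k : Type*) [Field k] (n : ℕ) (ε : Aq k n →ₐ[k] k) : One (KE k n ε) := ⟨(1 : k)⟩

noncomputable instance (k : Type*) [Field k] (n : ℕ) (ε : Aq k n →ₐ[k] k) :
    Module ((Aq k n)ᵐᵒᵖ) (KE k n ε) :=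
  Module.compHom k (epsOp k n ε)

instance (k : Type*) [Field k] (n : ℕ) (ε : Aq k n →ₐ[k] k) :
    SMulCommClass ((Aq k n)ᵐᵒᵖ) k (KE k n ε) :=
  ⟨fun a c x => by
    show epsOp k n ε a • (c • x) = c • (epsOp k n ε a • x)
    rw [smul_smul, smul_smul, mul_comm]⟩

/-- The free right `A`-module `P_ℓ = kC_ℓ ⊗ₖ A` with basis `C_ℓ` (for `ℓ ≥ 1`), realized as a
left module over the opposite algebra `Aᵐᵒᵖ`. -/
abbrev Pmod (k : Type*) [Field k] (n : ℕ) (hn : 2 ≤ n) (l : ℕ) :=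
  ↥(Cset n hn l) →₀ Aq k n

/-- The element `v^{(ℓ)}_{j,i} ⊗ a` of `P_ℓ`. -/
noncomputable def bas (k : Type*) [Field k] (n : ℕ) (hn : 2 ≤ n) (l : ℕ) (v : Mat n)
    (hv : v ∈ V n) (j i : Fin n) (a : Aq k n) : Pmod k n hn l :=
  Finsupp.single ⟨chainWord n hn v l j i, ⟨v, hv, j, i, rfl⟩⟩ a

/-- Pre-composition with a homomorphism of right `A`-modules, as the `k`-linear map
`Hom_A(N, k_ε) → Hom_A(M, k_ε)`, `g ↦ g ∘ d`. -/
noncomputable def homMap (k : Type*) [Field k] {n : ℕ} (ε : Aq k n →ₐ[k] k) {M N : Type*}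
    [AddCommMonoid M] [AddCommMonoid N] [Module ((Aq k n)ᵐᵒᵖ) M] [Module ((Aq k n)ᵐᵒᵖ) N]
    (d : M →ₗ[(Aq k n)ᵐᵒᵖ] N) :
    (N →ₗ[(Aq k n)ᵐᵒᵖ] KE k n ε) →ₗ[k] (M →ₗ[(Aq k n)ᵐᵒᵖ] KE k n ε) where
  toFun g := g.comp d
  map_add' _ _ := LinearMap.ext fun _ => rfl
  map_smul' _ _ := LinearMap.ext fun _ => rfl

/-- The right-hand side of the defining formula for `d₂` on the basis element
`v^{(2)}_{j,i} ⊗ 1`. -/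
noncomputable def d2RHS (k : Type*) [Field k] (n : ℕ) (hn : 2 ≤ n) (v : Mat n)
    (hv : v ∈ V n) (j i : Fin n) : Pmod k n hn 1 :=
  (∑ s : Fin n, bas k n hn 1 v hv j s (gen k (mD v) s i.rev))
    + bas k n hn 1 (mD v) (V_mD hv) j.rev i 1
    - (if j = finN n hn ∧ i = finN n hn then
        ∑ s ∈ Finset.univ.filter (fun s : Fin n => s ≠ fin1 n hn),
          ((∑ t : Fin n, bas k n hn 1 v hv t s (gen k (mD v) s t.rev))
            + bas k n hn 1 (mD v) (V_mD hv) s s.rev 1)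
      else 0)

/-- The right-hand side of the defining formula for `d_ℓ`, `ℓ ≥ 3`, on the basis element
`v^{(ℓ)}_{j,i} ⊗ 1`. -/
noncomputable def dTail (k : Type*) [Field k] (n : ℕ) (hn : 2 ≤ n) (l : ℕ) (v : Mat n)
    (hv : v ∈ V n) (j i : Fin n) : Pmod k n hn (l - 1) :=
  (∑ s : Fin n, bas k n hn (l - 1) v hv j s (gen k (pw l v) s i.rev))
    + bas k n hn (l - 1) (mD v) (V_mD hv) j.rev i ((-1 : Aq k n) ^ l)
    + (if j = finN n hn then
        ((bas k n hn (l - 1) (mT v) (V_mT hv) (fin1 n hn) (fin1 n hn)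
              (gen k (pw l (mT v)) i.rev (finN n hn))
            + (if l = 3 then
                ∑ s ∈ Finset.univ.filter (fun s : Fin n => s ≠ fin1 n hn ∧ s ≠ finN n hn),
                  bas k n hn (l - 1) (mT v) (V_mT hv) s s (gen k (pw l (mT v)) i.rev (finN n hn))
              else 0))
          - (if i = finN n hn then
              (∑ s : Fin n, bas k n hn (l - 1) (mT v) (V_mT hv) (fin1 n hn) s
                  (gen k (pw l (mT v)) s (finN n hn)))
                + bas k n hn (l - 1) (mS v) (V_mS hv) (finN n hn) (fin1 n hn) ((-1 : Aq k n) ^ l)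
            else 0))
      else 0)
    + (if j = fin1 n hn ∧ i = finN n hn then
        bas k n hn (l - 1) (mS v) (V_mS hv) (fin1 n hn) (fin1 n hn) ((-1 : Aq k n) ^ l)
          + (if l = 3 then
              ∑ s ∈ Finset.univ.filter (fun s : Fin n => s ≠ fin1 n hn ∧ s ≠ finN n hn),
                bas k n hn (l - 1) (mS v) (V_mS hv) s s ((-1 : Aq k n) ^ l)
            else 0)
      else 0)

/-- The system of identities from STATEMENT 14, for a fixed `v ∈ V`. -/
noncomputable def cond14 (k : Type*) [Field k] {n : ℕ} (hn : 2 ≤ n) (ε : Aq k n →ₐ[k] k)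
    (g : Pmod k n hn 1 →ₗ[(Aq k n)ᵐᵒᵖ] KE k n ε) (v : Mat n) (hv : v ∈ V n) : Prop :=
  ∀ j i : Fin n, g (bas k n hn 1 (mS v) (V_mS hv) j i 1) = -g (bas k n hn 1 v hv i j 1)

/-- The system of identities (1)–(4) from STATEMENT 16, for a fixed `v ∈ V`. -/
noncomputable def cond16 (k : Type*) [Field k] {n : ℕ} (hn : 2 ≤ n) (ε : Aq k n →ₐ[k] k)
    (l : ℕ) (g : Pmod k n hn (l - 1) →ₗ[(Aq k n)ᵐᵒᵖ] KE k n ε) (v : Mat n)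
    (hv : v ∈ V n) : Prop :=
  (∀ j i : Fin n, (j, i) ≠ (fin1 n hn, fin1 n hn) →
      g (bas k n hn (l - 1) (mT v) (V_mT hv) j i 1) =
        -(((-1 : k) ^ l) • g (bas k n hn (l - 1) (mS v) (V_mS hv) j.rev i.rev 1))
          - (if j = finN n hn ∧ i = finN n hn then
              g (bas k n hn (l - 1) v hv (fin1 n hn) (fin1 n hn) 1)
                + (if l = 3 then
                    ∑ s ∈ Finset.univ.filter (fun s : Fin n => s ≠ fin1 n hn ∧ s ≠ finN n hn),
                      g (bas k n hn (l - 1) v hv s s 1)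
                  else 0)
            else 0)) ∧
  (∀ j i : Fin n, (j, i) ≠ (fin1 n hn, fin1 n hn) →
      g (bas k n hn (l - 1) (mD v) (V_mD hv) j i 1) =
        -(((-1 : k) ^ l) • g (bas k n hn (l - 1) v hv j.rev i.rev 1))
          - (if j = finN n hn ∧ i = finN n hn then
              g (bas k n hn (l - 1) (mS v) (V_mS hv) (fin1 n hn) (fin1 n hn) 1)
                + (if l = 3 then
                    ∑ s ∈ Finset.univ.filter (fun s : Fin n => s ≠ fin1 n hn ∧ s ≠ finN n hn),
                      g (bas k n hn (l - 1) (mS v) (V_mS hv) s s 1)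
                  else 0)
            else 0)) ∧
  (g (bas k n hn (l - 1) (mD v) (V_mD hv) (fin1 n hn) (fin1 n hn) 1) =
      -(((-1 : k) ^ l) • g (bas k n hn (l - 1) (mT v) (V_mT hv) (fin1 n hn) (fin1 n hn) 1))
        - ((-1 : k) ^ l) • g (bas k n hn (l - 1) v hv (finN n hn) (finN n hn) 1)
        + (if l = 3 then
            ∑ s ∈ Finset.univ.filter (fun s : Fin n => s ≠ fin1 n hn ∧ s ≠ finN n hn),
              g (bas k n hn (l - 1) (mS v) (V_mS hv) s s 1)
          else 0)) ∧
  (g (bas k n hn (l - 1) (mS v) (V_mS hv) (finN n hn) (finN n hn) 1) =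
      -(if l = 3 then
          ∑ s ∈ Finset.univ.filter (fun s : Fin n => s ≠ fin1 n hn ∧ s ≠ finN n hn),
            g (bas k n hn (l - 1) (mS v) (V_mS hv) s s 1)
        else 0)
        + ((-1 : k) ^ l) • (g (bas k n hn (l - 1) v hv (finN n hn) (finN n hn) 1)
            + (if l = 3 then
                ∑ s ∈ Finset.univ.filter (fun s : Fin n => s ≠ fin1 n hn ∧ s ≠ finN n hn),
                  g (bas k n hn (l - 1) v hv s s 1)
              else 0)))


section helpers
variable {n : ℕ}

lemma uMat_apply (j i : Fin n) : uMat n j i = (false, j, i) := rfl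
lemma mT_apply (v : Mat n) (j i : Fin n) : mT v j i = v i j := rfl
lemma mS_apply (v : Mat n) (j i : Fin n) : mS v j i = genStar (v j.rev i.rev) := rfl
lemma mD_apply (v : Mat n) (j i : Fin n) : mD v j i = genStar (v i.rev j.rev) := rfl
lemma genStar_mk (b : Bool) (x y : Fin n) : genStar (b, x, y) = (!b, x, y) := rfl

lemma rev_fin1 (hn : 2 ≤ n) : (fin1 n hn).rev = finN n hn := by
  ext; simp [fin1, finN, Fin.val_rev]
lemma rev_finN (hn : 2 ≤ n) : (finN n hn).rev = fin1 n hn := by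
  ext; simp [fin1, finN, Fin.val_rev]; omega
lemma fin1_ne_finN (hn : 2 ≤ n) : fin1 n hn ≠ finN n hn := by
  simp [fin1, finN, Fin.ext_iff]; omega
lemma rev_eq_iff {a b : Fin n} : a.rev = b ↔ a = b.rev := by
  constructor <;> rintro rfl <;> simp [Fin.rev_rev]
lemma rev_swap {a b : Fin n} : a = b.rev ↔ b = a.rev := by
  constructor <;> rintro rfl <;> simp [Fin.rev_rev]

lemma genStar_inj {a b : Gen n} (h : genStar a = genStar b) : a = b := by
  obtain ⟨x, y⟩ := a; obtain ⟨x', y'⟩ := b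
  simpa [genStar, Prod.ext_iff] using h

lemma mT_mT (v : Mat n) : mT (mT v) = v := rfl
lemma mT_mS (v : Mat n) : mT (mS v) = mD v := rfl
lemma mT_mD (v : Mat n) : mT (mD v) = mS v := rfl

lemma u_ne_uT (hn : 2 ≤ n) : uMat n ≠ mT (uMat n) := by
  intro h
  have := congrFun (congrFun h (fin1 n hn)) (finN n hn)
  simp [uMat_apply, mT_apply, Prod.ext_iff] at this
  exact fin1_ne_finN hn this.1
lemma u_ne_uS (hn : 2 ≤ n) : uMat n ≠ mS (uMat n) := by
  intro h
  have := congrFun (congrFun h (fin1 n hn)) (finN n hn)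
  simp [uMat_apply, mS_apply, genStar_mk, Prod.ext_iff] at this
lemma u_ne_uD (hn : 2 ≤ n) : uMat n ≠ mD (uMat n) := by
  intro h
  have := congrFun (congrFun h (fin1 n hn)) (finN n hn)
  simp [uMat_apply, mD_apply, genStar_mk, Prod.ext_iff] at this
lemma uT_ne_uS (hn : 2 ≤ n) : mT (uMat n) ≠ mS (uMat n) := by
  intro h
  have := congrFun (congrFun h (fin1 n hn)) (finN n hn)
  simp [uMat_apply, mT_apply, mS_apply, genStar_mk, Prod.ext_iff] at this
lemma uT_ne_uD (hn : 2 ≤ n) : mT (uMat n) ≠ mD (uMat n) := by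
  intro h
  have := congrFun (congrFun h (fin1 n hn)) (finN n hn)
  simp [uMat_apply, mT_apply, mD_apply, genStar_mk, Prod.ext_iff] at this
lemma uS_ne_uD (hn : 2 ≤ n) : mS (uMat n) ≠ mD (uMat n) := by
  intro h
  have := congrFun (congrFun h (fin1 n hn)) (finN n hn)
  simp [uMat_apply, mS_apply, mD_apply, genStar_mk, Prod.ext_iff,
    rev_fin1 hn, rev_finN hn] at this
  exact absurd this.2 (fin1_ne_finN hn)

/-- alternating list -/
def altList : ℕ → Gen n → Gen n → List (Gen n)
  | 0, _, _ => []
  | k+1, b, c => b :: altList k c b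

lemma altList_two (k : ℕ) (b c : Gen n) : altList (k+2) b c = b :: c :: altList k b c := rfl

lemma altList_length (k : ℕ) (b c : Gen n) : (altList k b c).length = k := by
  induction k generalizing b c with
  | zero => rfl
  | succ k ih => simp [altList, ih]

lemma altList_even_append (m : ℕ) (b c : Gen n) :
    altList (2*m) b c ++ [b] = altList (2*m+1) b c := by
  induction m generalizing b c with
  | zero => rfl
  | succ m ih =>
    have h1 : 2 * (m+1) = 2*m + 2 := by ring
    have h2 : 2 * (m+1) + 1 = (2*m+1) + 2 := by ring
    rw [h1, show 2*m+2+1 = (2*m+1)+2 by ring, altList_two, altList_two]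
    simp [ih]

lemma toList_pair_pow (m : ℕ) (b c : Gen n) :
    FreeMonoid.toList ((FreeMonoid.of b * FreeMonoid.of c) ^ m) = altList (2*m) b c := by
  induction m with
  | zero => rfl
  | succ m ih =>
    rw [pow_succ']
    have h1 : 2 * (m+1) = 2*m + 2 := by ring
    rw [h1, altList_two]
    simp [FreeMonoid.toList_mul, ih]

lemma chainWord_toList (hn : 2 ≤ n) (v : Mat n) (l : ℕ) (hl : 2 ≤ l) (j i : Fin n) :
    FreeMonoid.toList (chainWord n hn v l j i) =
      v j (finN n hn) ::
        (altList (l-2) (mD v (fin1 n hn) (finN n hn)) (v (fin1 n hn) (finN n hn)) ++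
          [if l % 2 = 0 then mD v (fin1 n hn) i.rev else v (fin1 n hn) i.rev]) := by
  have hl1 : l ≠ 1 := by omega
  rcases Nat.mod_two_eq_zero_or_one l with hp | hp
  · obtain ⟨m, hm⟩ : ∃ m, l = 2*m + 2 := ⟨(l-2)/2, by omega⟩
    subst hm
    rw [chainWord, if_neg hl1, if_pos hp]
    have : (2*m+2-2)/2 = m := by omega
    rw [this]
    simp [FreeMonoid.toList_mul, toList_pair_pow, hp, show 2*m+2-2 = 2*m by omega]
  · obtain ⟨m, hm⟩ : ∃ m, l = 2*m + 3 := ⟨(l-3)/2, by omega⟩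
    subst hm
    rw [chainWord, if_neg hl1, if_neg (by omega)]
    have : (2*m+3-3)/2 = m := by omega
    rw [this]
    have h2 : 2*m+3-2 = 2*m+1 := by omega
    simp [FreeMonoid.toList_mul, toList_pair_pow, hp, h2, ← altList_even_append]

lemma of_pair_eq {a b a' b' : Gen n} :
    (FreeMonoid.of a * FreeMonoid.of b = FreeMonoid.of a' * FreeMonoid.of b') ↔
      (a = a' ∧ b = b') := by
  constructor
  · intro h
    have := congrArg FreeMonoid.toList h
    simpa [FreeMonoid.toList_mul] using this
  · rintro ⟨rfl, rfl⟩; rfl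

lemma V_inj (hn : 2 ≤ n) {v : Mat n} (hv : v ∈ V n) {a b a' b' : Fin n}
    (h : v a b = v a' b') : a = a' ∧ b = b' := by
  simp only [V, Set.mem_insert_iff, Set.mem_singleton_iff] at hv
  rcases hv with rfl | rfl | rfl | rfl <;>
    simp only [uMat_apply, mT_apply, mS_apply, mD_apply, genStar_mk, Prod.mk.injEq,
      Fin.rev_inj, true_and] at h <;> tauto

lemma V_eq_of_eq_1N (hn : 2 ≤ n) {v w : Mat n} (hv : v ∈ V n) (hw : w ∈ V n)
    (h : w (fin1 n hn) (finN n hn) = v (fin1 n hn) (finN n hn)) : w = v := by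
  have hne := fin1_ne_finN hn
  simp only [V, Set.mem_insert_iff, Set.mem_singleton_iff] at hv hw
  rcases hv with rfl | rfl | rfl | rfl <;> rcases hw with rfl | rfl | rfl | rfl <;>
    first
      | rfl
      | (simp only [uMat_apply, mT_apply, mS_apply, mD_apply, genStar_mk, Prod.mk.injEq,
          rev_fin1 hn, rev_finN hn] at h;
         first
           | (exact absurd h.2.1 hne)
           | (exact absurd h.2.1.symm hne)
           | (exact absurd h.2.2 hne)
           | (exact absurd h.2.2.symm hne)
           | simp at h)

end helpers

lemma altList_succ (k : ℕ) (b c : Gen n) : altList (k+1) b c = b :: altList k c b := rfl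

lemma chainWord_two (hn : 2 ≤ n) (x : Mat n) (a b : Fin n) :
    chainWord n hn x 2 a b =
      FreeMonoid.of (x a (finN n hn)) * FreeMonoid.of (mD x (fin1 n hn) b.rev) := by
  rw [chainWord]
  norm_num


theorem statement_11 (n : ℕ) (hn : 2 ≤ n) :
    ∀ v ∈ V n, ∀ w ∈ V n, ∀ (t s j i : Fin n) (l : ℕ), 1 ≤ l →
      (chainWord n hn w l t s = chainWord n hn v l j i ↔
        (w = v ∧ t = j ∧ s = i) ∨
          (l = 1 ∧ w = mT v ∧ t = i.rev ∧ s = j.rev) ∨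
          (l = 2 ∧ w = mT v ∧ t = finN n hn ∧ s = finN n hn ∧ j = finN n hn ∧
            i = finN n hn)) := by
  intro v hv w hw t s j i l hl
  have hne := fin1_ne_finN hn
  by_cases h1 : l = 1
  · subst h1
    rw [chainWord, chainWord, if_pos rfl, if_pos rfl, FreeMonoid.of_injective.eq_iff]
    simp only [V, Set.mem_insert_iff, Set.mem_singleton_iff] at hv hw
    rcases hv with rfl|rfl|rfl|rfl <;> rcases hw with rfl|rfl|rfl|rfl <;>
      simp [uMat_apply, mT_apply, mS_apply, mD_apply, genStar_mk, Prod.ext_iff,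
        mT_mT, mT_mS, mT_mD, Fin.rev_rev, Fin.rev_inj, rev_eq_iff, rev_swap,
        u_ne_uT hn, (u_ne_uT hn).symm, u_ne_uS hn, (u_ne_uS hn).symm,
        u_ne_uD hn, (u_ne_uD hn).symm, uT_ne_uS hn, (uT_ne_uS hn).symm,
        uT_ne_uD hn, (uT_ne_uD hn).symm, uS_ne_uD hn, (uS_ne_uD hn).symm, eq_comm] <;>
      tauto
  · by_cases h2 : l = 2
    · subst h2
      rw [chainWord_two hn, chainWord_two hn, of_pair_eq]
      simp only [mD_apply, Fin.rev_rev, rev_fin1 hn]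
      simp only [V, Set.mem_insert_iff, Set.mem_singleton_iff] at hv hw
      rcases hv with rfl|rfl|rfl|rfl <;> rcases hw with rfl|rfl|rfl|rfl <;>
        simp [uMat_apply, mT_apply, mS_apply, mD_apply, genStar_mk, Prod.ext_iff,
          mT_mT, mT_mS, mT_mD, Fin.rev_rev, Fin.rev_inj, rev_eq_iff, rev_swap,
          rev_fin1 hn, rev_finN hn,
          u_ne_uT hn, (u_ne_uT hn).symm, u_ne_uS hn, (u_ne_uS hn).symm,
          u_ne_uD hn, (u_ne_uD hn).symm, uT_ne_uS hn, (uT_ne_uS hn).symm,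
          uT_ne_uD hn, (uT_ne_uD hn).symm, uS_ne_uD hn, (uS_ne_uD hn).symm, eq_comm] <;>
        tauto
    · have hl3 : 3 ≤ l := by omega
      constructor
      · intro h
        have h' := congrArg FreeMonoid.toList h
        rw [chainWord_toList hn w l (by omega), chainWord_toList hn v l (by omega)] at h'
        injection h' with hA hrest
        obtain ⟨hM, hd⟩ := List.append_inj hrest (by simp [altList_length])
        obtain ⟨kk, hk⟩ : ∃ kk, l - 2 = kk + 1 := ⟨l - 3, by omega⟩
        rw [hk, altList_succ, altList_succ] at hM
        have hb : mD w (fin1 n hn) (finN n hn) = mD v (fin1 n hn) (finN n hn) :=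
          List.head_eq_of_cons_eq hM
        rw [mD_apply, mD_apply, rev_fin1 hn, rev_finN hn] at hb
        have hwv := V_eq_of_eq_1N hn hv hw (genStar_inj hb)
        subst hwv
        have ht := (V_inj hn hv hA).1
        have hd' := List.head_eq_of_cons_eq hd
        have hs : s = i := by
          rcases Nat.mod_two_eq_zero_or_one l with hp | hp <;>
            simp only [hp, if_pos, if_neg, reduceIte] at hd'
          · rw [mD_apply, mD_apply, Fin.rev_rev, Fin.rev_rev, rev_fin1 hn] at hd'
            exact (V_inj hn hv (genStar_inj hd')).1
          · exact Fin.rev_inj.mp (V_inj hn hv hd').2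
        exact Or.inl ⟨rfl, ht, hs⟩
      · rintro (⟨rfl, rfl, rfl⟩ | ⟨hc, -⟩ | ⟨hc, -⟩)
        · rfl
        · omega
        · omega


end UnPlusAnick
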